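/- arXiv:2209.01876 — 2 statements merged into one kernel-verified Lean document; each statement's English description precedes it below -/
import Mathlib

section
/- (Value-function decomposition) For every state s ∈ S, the value function decomposes into frequency-weighted state-item functions: V_π(s) = (1/N)·Σ_{k∈K: r^π_{s,k}>0} r^π_{s,k}·Q_π(s,k). -/
open scoped Classical

/-- Value-function decomposition: For every state `s ∈ S`, the value function
decomposes into frequency-weighted state-item functions:
`V_π(s) = (1/N)·Σ_{k∈K : r^π_{s,k}>0} r^π_{s,k}·Q_π(s,k)`. -/
theorem slateFree_value_decomposition
    {S K : Type*} [Fintype S] [Nonempty S] [Fintype K] [DecidableEq K]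
    (N : ℕ) (hN : 1 ≤ N)
    (A : S → Finset (Finset K)) (hA : ∀ s, (A s).Nonempty)
    (hcard : ∀ s, ∀ ω ∈ A s, ω.card = N)
    (π : S → Finset K → ℝ)
    (hπ0 : ∀ s, ∀ ω ∈ A s, 0 ≤ π s ω) (hπ1 : ∀ s, ∀ ω ∈ A s, π s ω ≤ 1)
    (hπsum : ∀ s, ∑ ω ∈ A s, π s ω = 1)
    (r : S → K → ℝ)
    (hr : ∀ s j, r s j = ∑ ω ∈ A s, π s ω * (if j ∈ ω then 1 else 0))
    (Q : S → Finset K → ℝ)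
    (V : S → ℝ)
    (hV : ∀ s, V s = ∑ ω ∈ A s, π s ω * Q s ω)
    (Qit : S → K → ℝ)
    (hQit : ∀ s j, 0 < r s j →
      Qit s j = (r s j)⁻¹ * ∑ ω ∈ A s, π s ω * Q s ω * (if j ∈ ω then 1 else 0)) :
    ∀ s : S,
      V s = (1 / (N : ℝ)) *
        ∑ k ∈ Finset.univ.filter (fun k : K => 0 < r s k), r s k * Qit s k := by
  intro s
  have hNpos : (0:ℝ) < N := by exact_mod_cast hN
  -- positivity of r on items in slates with positive probability
  have hrpos : ∀ ω ∈ A s, 0 < π s ω → ∀ k ∈ ω, 0 < r s k := by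
    intro ω hω hπ k hk
    rw [hr]
    have hle : π s ω * (if k ∈ ω then 1 else 0) ≤
        ∑ ω' ∈ A s, π s ω' * (if k ∈ ω' then 1 else 0) := by
      refine Finset.single_le_sum (f := fun ω' => π s ω' * (if k ∈ ω' then (1:ℝ) else 0)) (fun ω' hω' => ?_) hω
      exact mul_nonneg (hπ0 s ω' hω') (by split <;> norm_num)
    simp only [hk, if_pos] at hle
    linarith
  have key : ∑ k ∈ Finset.univ.filter (fun k : K => 0 < r s k), r s k * Qit s k
      = (N : ℝ) * V s := by
    have step1 : ∀ k ∈ Finset.univ.filter (fun k : K => 0 < r s k),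
        r s k * Qit s k = ∑ ω ∈ A s, π s ω * Q s ω * (if k ∈ ω then 1 else 0) := by
      intro k hk
      rw [Finset.mem_filter] at hk
      rw [hQit s k hk.2, ← mul_assoc, mul_inv_cancel₀ (ne_of_gt hk.2), one_mul]
    rw [Finset.sum_congr rfl step1, Finset.sum_comm, hV]
    rw [Finset.mul_sum]
    refine Finset.sum_congr rfl (fun ω hω => ?_)
    rcases eq_or_lt_of_le (hπ0 s ω hω) with h0 | hpos
    · simp [← h0]
    · have hsub : ω ⊆ Finset.univ.filter (fun k : K => 0 < r s k) := by
        intro k hk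
        exact Finset.mem_filter.mpr ⟨Finset.mem_univ k, hrpos ω hω hpos k hk⟩
      have hstep : (∑ x ∈ Finset.univ.filter (fun k : K => 0 < r s k),
          π s ω * Q s ω * if x ∈ ω then 1 else 0)
          = ∑ x ∈ (Finset.univ.filter (fun k : K => 0 < r s k)).filter (· ∈ ω),
              π s ω * Q s ω := by
        simp only [mul_ite, mul_one, mul_zero]
        rw [← Finset.sum_filter]
      rw [hstep]
      have : (Finset.univ.filter (fun k : K => 0 < r s k)).filter (· ∈ ω) = ω := by
        ext k
        simp only [Finset.mem_filter, Finset.mem_univ, true_and]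
        constructor
        · rintro ⟨_, h⟩; exact h
        · intro h; exact ⟨hrpos ω hω hpos k h, h⟩
      rw [this]
      rw [Finset.sum_const, hcard s ω hω]
      push_cast
      ring
  rw [key]
  field_simp
end

section
/- (Theorem 1, SlateFree-MDP) Suppose Q_π satisfies the Bellman policy-evaluation equations. Then for every state s ∈ S and every item j ∈ K with r^π_{s,j} > 0, the state-item functions satisfy the decomposed Bellman equations: Q_π(s,j) = c^π(s,j) + λ·Σ_{s'∈S} P^π(s'|s,j)·(1/N)·Σ_{k∈K: r^π_{s',k}>0} r^π_{s',k}·Q_π(s',k). -/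
open scoped Classical

/-- Theorem 1, SlateFree-MDP: If `Q_π` satisfies the Bellman
policy-evaluation equations, then for every state `s` and item `j` with `r^π_{s,j} > 0`,
the state-item functions satisfy the decomposed Bellman equations:
`Q_π(s,j) = c^π(s,j) + λ·Σ_{s'} P^π(s'|s,j)·(1/N)·Σ_{k : r^π_{s',k}>0} r^π_{s',k}·Q_π(s',k)`. -/
theorem slateFree_MDP_decomposition
    {S K : Type*} [Fintype S] [Nonempty S] [Fintype K] [DecidableEq K]
    (N : ℕ) (hN : 1 ≤ N)
    (A : S → Finset (Finset K)) (hA : ∀ s, (A s).Nonempty)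
    (hcard : ∀ s, ∀ ω ∈ A s, ω.card = N)
    (π : S → Finset K → ℝ)
    (hπ0 : ∀ s, ∀ ω ∈ A s, 0 ≤ π s ω) (hπ1 : ∀ s, ∀ ω ∈ A s, π s ω ≤ 1)
    (hπsum : ∀ s, ∑ ω ∈ A s, π s ω = 1)
    (P : S → Finset K → S → ℝ)
    (hP0 : ∀ s, ∀ ω ∈ A s, ∀ s', 0 ≤ P s ω s')
    (hP1 : ∀ s, ∀ ω ∈ A s, ∀ s', P s ω s' ≤ 1)
    (hPsum : ∀ s, ∀ ω ∈ A s, ∑ s' : S, P s ω s' = 1)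
    (r : S → K → ℝ)
    (hr : ∀ s j, r s j = ∑ ω ∈ A s, π s ω * (if j ∈ ω then 1 else 0))
    (Pit : S → K → S → ℝ)
    (hPit : ∀ s j, 0 < r s j → ∀ s',
      Pit s j s' = (r s j)⁻¹ * ∑ ω ∈ A s, π s ω * (if j ∈ ω then 1 else 0) * P s ω s')
    (c : S → Finset K → ℝ)
    (cit : S → K → ℝ)
    (hcit : ∀ s j, 0 < r s j →
      cit s j = (r s j)⁻¹ * ∑ ω ∈ A s, π s ω * c s ω * (if j ∈ ω then 1 else 0))
    (lam : ℝ) (hlam0 : 0 < lam) (hlam1 : lam < 1)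
    (Q : S → Finset K → ℝ)
    (hBell : ∀ s, ∀ ω ∈ A s,
      Q s ω = c s ω + lam * ∑ s' : S, P s ω s' * ∑ ω' ∈ A s', π s' ω' * Q s' ω')
    (Qit : S → K → ℝ)
    (hQit : ∀ s j, 0 < r s j →
      Qit s j = (r s j)⁻¹ * ∑ ω ∈ A s, π s ω * Q s ω * (if j ∈ ω then 1 else 0)) :
    ∀ (s : S) (j : K), 0 < r s j →
      Qit s j = cit s j + lam * ∑ s' : S, Pit s j s' *
        ((1 / (N : ℝ)) *
          ∑ k ∈ Finset.univ.filter (fun k : K => 0 < r s' k), r s' k * Qit s' k) := by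
  intro s j hrj
  have hrnn : ∀ t k, 0 ≤ r t k := by
    intro t k; rw [hr]
    refine Finset.sum_nonneg fun ω hω => mul_nonneg (hπ0 t ω hω) ?_
    split <;> norm_num
  have hNne : (N : ℝ) ≠ 0 := by positivity
  let V : S → ℝ := fun t => ∑ ω ∈ A t, π t ω * Q t ω
  have hBell' : ∀ t, ∀ ω ∈ A t, Q t ω = c t ω + lam * ∑ s' : S, P t ω s' * V s' := hBell
  have hV : ∀ t, (1/(N:ℝ)) * ∑ k ∈ Finset.univ.filter (fun k : K => 0 < r t k),
      r t k * Qit t k = V t := by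
    intro t
    have h1 : ∀ k, 0 < r t k → r t k * Qit t k
        = ∑ ω ∈ A t, π t ω * Q t ω * (if k ∈ ω then 1 else 0) := by
      intro k hk
      rw [hQit t k hk, ← mul_assoc, mul_inv_cancel₀ hk.ne', one_mul]
    have h2 : ∀ k, ¬ 0 < r t k →
        (∑ ω ∈ A t, π t ω * Q t ω * (if k ∈ ω then 1 else 0)) = 0 := by
      intro k hk
      have hzero : (∑ ω ∈ A t, π t ω * (if k ∈ ω then 1 else 0)) = 0 := by
        rw [← hr]; exact le_antisymm (not_lt.mp hk) (hrnn t k)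
      refine Finset.sum_eq_zero fun ω hω => ?_
      have hterm : π t ω * (if k ∈ ω then 1 else 0) = 0 :=
        (Finset.sum_eq_zero_iff_of_nonneg (fun ω hω =>
          mul_nonneg (hπ0 t ω hω) (by split <;> norm_num))).mp hzero ω hω
      by_cases h : k ∈ ω
      · rw [if_pos h, mul_one] at hterm
        rw [if_pos h, mul_one, hterm, zero_mul]
      · rw [if_neg h, mul_zero]
    have hsum : ∑ k ∈ Finset.univ.filter (fun k : K => 0 < r t k), r t k * Qit t k
        = ∑ k : K, ∑ ω ∈ A t, π t ω * Q t ω * (if k ∈ ω then 1 else 0) := by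
      rw [Finset.sum_filter]
      refine Finset.sum_congr rfl fun k _ => ?_
      by_cases hk : 0 < r t k
      · simp only [hk, if_true]; exact h1 k hk
      · simp only [hk, if_false]; exact (h2 k hk).symm
    rw [hsum, Finset.sum_comm]
    have hcardsum : ∀ ω ∈ A t, (∑ k : K, π t ω * Q t ω * (if k ∈ ω then 1 else 0))
        = (N : ℝ) * (π t ω * Q t ω) := by
      intro ω hω
      rw [← Finset.mul_sum]
      have : (∑ k : K, (if k ∈ ω then (1:ℝ) else 0)) = (ω.card : ℝ) := by
        simp [Finset.sum_ite_mem, Finset.univ_inter]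
      rw [this, hcard t ω hω, mul_comm]
    rw [Finset.sum_congr rfl hcardsum, ← Finset.mul_sum, ← mul_assoc, one_div,
      inv_mul_cancel₀ hNne, one_mul]
  have key : (∑ ω ∈ A s, π s ω * Q s ω * (if j ∈ ω then 1 else 0))
      = (∑ ω ∈ A s, π s ω * c s ω * (if j ∈ ω then 1 else 0))
        + lam * ∑ s' : S, (∑ ω ∈ A s, π s ω * (if j ∈ ω then 1 else 0) * P s ω s')
            * V s' := by
    have step : ∀ ω ∈ A s, π s ω * Q s ω * (if j ∈ ω then 1 else 0)
        = π s ω * c s ω * (if j ∈ ω then 1 else 0)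
          + ∑ s' : S, lam * ((π s ω * (if j ∈ ω then 1 else 0) * P s ω s') * V s') := by
      intro ω hω
      rw [hBell' s ω hω, mul_add, add_mul, Finset.mul_sum, Finset.mul_sum,
        Finset.sum_mul]
      congr 1
      exact Finset.sum_congr rfl fun s' _ => by ring
    rw [Finset.sum_congr rfl step, Finset.sum_add_distrib]
    congr 1
    rw [Finset.sum_comm, Finset.mul_sum]
    refine Finset.sum_congr rfl fun s' _ => ?_
    rw [Finset.sum_mul, Finset.mul_sum]
  have hPit' : ∀ s', (∑ ω ∈ A s, π s ω * (if j ∈ ω then 1 else 0) * P s ω s')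
      = r s j * Pit s j s' := by
    intro s'
    rw [hPit s j hrj s', ← mul_assoc, mul_inv_cancel₀ hrj.ne', one_mul]
  rw [hQit s j hrj, key, hcit s j hrj, mul_add]
  congr 1
  simp only [hV, hPit']
  rw [show (∑ s' : S, r s j * Pit s j s' * V s') = r s j * ∑ s' : S, Pit s j s' * V s' by
    rw [Finset.mul_sum]; exact Finset.sum_congr rfl fun s' _ => by ring]
  field_simp [hrj.ne']
end
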